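/- Let ρ > 0, μ > 0, ν > 0, c > 0, w ∈ ℝ and t > 0. Then ∫₀^t y^{μ−1} M^c_{ρ,μ}(w y^ρ) (t − y)^{ν−1} dy = Γ(ν) t^{μ+ν−1} M^c_{ρ, μ+ν}(w t^ρ), where M^c_{a,b}(z) = Σ_{n=0}^∞ (c)_n z^n / (n! Γ(an + b)) is the three-parameter (Prabhakar) Mittag-Leffler function and (c)_n is the Pochhammer symbol. -/

import Mathlib

open MeasureTheory Real Filter

/-- The three-parameter (Prabhakar) Mittag-Leffler function
`M^c_{a,b}(z) = ∑ (c)ₙ zⁿ / (n! Γ(an + b))`, where `(c)ₙ` is the Pochhammer symbol. -/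
noncomputable def prabhakarML (a b c z : ℝ) : ℝ :=
  ∑' n : ℕ, (ascPochhammer ℝ n).eval c * z ^ n / (n.factorial * Real.Gamma (a * n + b))

open Set


lemma betaReal01_integrable {a b : ℝ} (ha : 0 < a) (hb : 0 < b) :
    IntervalIntegrable (fun x : ℝ => x ^ (a - 1) * (1 - x) ^ (b - 1)) volume 0 1 := by
  have hu : 0 < Complex.re (a : ℂ) := by simpa using ha
  have hv : 0 < Complex.re (b : ℂ) := by simpa using hb
  have h := Complex.betaIntegral_convergent hu hv
  rw [intervalIntegrable_iff_integrableOn_Ioc_of_le (by norm_num)] at h ⊢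
  refine (h.re).congr ?_
  filter_upwards [ae_restrict_mem measurableSet_Ioc] with x hx
  have h0 : (0:ℝ) ≤ x := hx.1.le
  have h1 : (0:ℝ) ≤ 1 - x := by linarith [hx.2]
  have e1 : ((x:ℂ)) ^ ((a:ℂ) - 1) = ((x ^ (a-1) : ℝ) : ℂ) := by
    rw [Complex.ofReal_cpow h0]; push_cast; ring_nf
  have e2 : ((1 - (x:ℂ))) ^ ((b:ℂ) - 1) = (((1-x) ^ (b-1) : ℝ) : ℂ) := by
    rw [Complex.ofReal_cpow h1]; push_cast; ring_nf
  simp [e1, e2, ← Complex.ofReal_mul]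

lemma betaReal01 {a b : ℝ} (ha : 0 < a) (hb : 0 < b) :
    ∫ x in (0:ℝ)..1, x ^ (a - 1) * (1 - x) ^ (b - 1)
      = Real.Gamma a * Real.Gamma b / Real.Gamma (a + b) := by
  have hu : 0 < Complex.re (a : ℂ) := by simpa using ha
  have hv : 0 < Complex.re (b : ℂ) := by simpa using hb
  have h := Complex.Gamma_mul_Gamma_eq_betaIntegral hu hv
  have hβ : Complex.betaIntegral a b
      = ((∫ x in (0:ℝ)..1, x ^ (a - 1) * (1 - x) ^ (b - 1) : ℝ) : ℂ) := by
    rw [Complex.betaIntegral, ← intervalIntegral.integral_ofReal]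
    refine intervalIntegral.integral_congr fun x hx => ?_
    rw [uIcc_of_le (by norm_num : (0:ℝ) ≤ 1)] at hx
    have h0 : (0:ℝ) ≤ x := hx.1
    have h1 : (0:ℝ) ≤ 1 - x := by linarith [hx.2]
    rw [Complex.ofReal_mul, Complex.ofReal_cpow h0, Complex.ofReal_cpow h1]
    push_cast; ring_nf
  rw [hβ, ← Complex.ofReal_add, Complex.Gamma_ofReal, Complex.Gamma_ofReal,
    Complex.Gamma_ofReal, ← Complex.ofReal_mul, ← Complex.ofReal_mul] at h
  have hab : Real.Gamma (a + b) ≠ 0 := (Real.Gamma_pos_of_pos (by linarith)).ne'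
  have := Complex.ofReal_injective h
  field_simp
  linarith [this]

lemma betaReal_scaled_eqOn {a b t : ℝ} (ht : 0 < t) :
    ∀ y ∈ uIcc (0:ℝ) t, y ^ (a - 1) * (t - y) ^ (b - 1)
      = t ^ (a + b - 2) * ((t⁻¹ * y) ^ (a - 1) * (1 - t⁻¹ * y) ^ (b - 1)) := by
  intro y hy
  rw [uIcc_of_le ht.le] at hy
  have h0 : (0:ℝ) ≤ y := hy.1
  have h1 : (0:ℝ) ≤ t - y := by linarith [hy.2]
  have htne : t ^ (a-1) ≠ 0 := (Real.rpow_pos_of_pos ht _).ne'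
  have htne' : t ^ (b-1) ≠ 0 := (Real.rpow_pos_of_pos ht _).ne'
  have e0 : t⁻¹ * y = y / t := by ring
  have e1 : (1 : ℝ) - y / t = (t - y) / t := by field_simp
  rw [e0, e1, Real.div_rpow h0 ht.le, Real.div_rpow h1 ht.le]
  have e2 : t ^ (a + b - 2) = t ^ (a-1) * t ^ (b-1) := by
    rw [← Real.rpow_add ht]; ring_nf
  rw [e2]; field_simp

lemma betaReal_integrable {a b : ℝ} (ha : 0 < a) (hb : 0 < b) {t : ℝ} (ht : 0 < t) :
    IntervalIntegrable (fun y : ℝ => y ^ (a - 1) * (t - y) ^ (b - 1)) volume 0 t := by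
  have h := ((betaReal01_integrable ha hb).comp_mul_left (c := t⁻¹) enorm_ne_top enorm_ne_top).const_mul (t ^ (a + b - 2))
  have h' : IntervalIntegrable
      (fun y : ℝ => t ^ (a + b - 2) * ((t⁻¹ * y) ^ (a - 1) * (1 - t⁻¹ * y) ^ (b - 1)))
      volume 0 t := by
    have : (0:ℝ)/t⁻¹ = 0 := by simp
    have h2 : (1:ℝ)/t⁻¹ = t := by field_simp
    rw [this, h2] at h
    exact h
  refine h'.congr ?_
  intro y hy
  have hy' : y ∈ uIcc (0:ℝ) t := uIoc_subset_uIcc hy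
  exact (betaReal_scaled_eqOn ht y hy').symm

lemma betaReal {a b : ℝ} (ha : 0 < a) (hb : 0 < b) {t : ℝ} (ht : 0 < t) :
    ∫ y in (0:ℝ)..t, y ^ (a - 1) * (t - y) ^ (b - 1)
      = Real.Gamma a * Real.Gamma b / Real.Gamma (a + b) * t ^ (a + b - 1) := by
  rw [intervalIntegral.integral_congr (betaReal_scaled_eqOn ht)]
  rw [intervalIntegral.integral_const_mul]
  have hne : t⁻¹ ≠ 0 := by positivity
  rw [intervalIntegral.integral_comp_mul_left
    (fun x => x ^ (a - 1) * (1 - x) ^ (b - 1)) hne]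
  simp only [mul_zero, smul_eq_mul]
  rw [inv_mul_cancel₀ ht.ne', betaReal01 ha hb, inv_inv]
  have e : t ^ (a + b - 2) * t = t ^ (a + b - 1) := by
    nth_rewrite 2 [← Real.rpow_one t]
    rw [← Real.rpow_add ht]; ring_nf
  rw [show t ^ (a + b - 2) * (t * (Real.Gamma a * Real.Gamma b / Real.Gamma (a + b)))
      = Real.Gamma a * Real.Gamma b / Real.Gamma (a + b) * (t ^ (a+b-2) * t) by ring, e]


/-- Gautschi-type bound from log-convexity: `Γ(x+1) ≤ Γ(x+a) * (x+a)^(1-a)` for `0 < a ≤ 1`. -/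
lemma Gamma_add_one_le {a x : ℝ} (ha : 0 < a) (ha1 : a ≤ 1) (hx : 0 < x) :
    Real.Gamma (x + 1) ≤ Real.Gamma (x + a) * (x + a) ^ (1 - a) := by
  have hxa : 0 < x + a := by linarith
  have hxa1 : 0 < x + a + 1 := by linarith
  have h := Real.convexOn_log_Gamma.2 (Set.mem_Ioi.2 hxa) (Set.mem_Ioi.2 hxa1)
    ha.le (by linarith : (0:ℝ) ≤ 1 - a) (by ring)
  have hpt : a • (x + a) + (1 - a) • (x + a + 1) = x + 1 := by
    simp only [smul_eq_mul]; ring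
  rw [hpt] at h
  simp only [Function.comp_apply, smul_eq_mul] at h
  have hrec : Real.Gamma (x + a + 1) = (x + a) * Real.Gamma (x + a) := by
    rw [Real.Gamma_add_one hxa.ne']
  have hGpos : 0 < Real.Gamma (x + a) := Real.Gamma_pos_of_pos hxa
  have hG1pos : 0 < Real.Gamma (x + 1) := Real.Gamma_pos_of_pos (by linarith)
  rw [hrec, Real.log_mul hxa.ne' hGpos.ne'] at h
  have h2 : Real.log (Real.Gamma (x + 1))
      ≤ Real.log (Real.Gamma (x + a)) + (1 - a) * Real.log (x + a) := by nlinarith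
  calc Real.Gamma (x + 1) = Real.exp (Real.log (Real.Gamma (x + 1))) := (Real.exp_log hG1pos).symm
    _ ≤ Real.exp (Real.log (Real.Gamma (x + a)) + (1 - a) * Real.log (x + a)) :=
        Real.exp_le_exp.2 h2
    _ = Real.Gamma (x + a) * (x + a) ^ (1 - a) := by
        rw [Real.exp_add, Real.exp_log hGpos, Real.rpow_def_of_pos hxa, mul_comm (Real.log _)]

lemma summable_prabhakar {a b c : ℝ} (ha : 0 < a) (hb : 0 < b) (hc : 0 < c) (z : ℝ) :
    Summable fun n : ℕ =>
      (ascPochhammer ℝ n).eval c * z ^ n / (n.factorial * Real.Gamma (a * n + b)) := by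
  set a' : ℝ := min a 1 with ha'def
  have ha' : 0 < a' := lt_min ha one_pos
  have ha'1 : a' ≤ 1 := min_le_right _ _
  have ha'a : a' ≤ a := min_le_left _ _
  have hx : Tendsto (fun n : ℕ => a * n + b) atTop atTop :=
    tendsto_atTop_add_const_right _ b
      (Tendsto.const_mul_atTop ha tendsto_natCast_atTop_atTop)
  have hP : Tendsto (fun n : ℕ => (a * n + b + 1) ^ a') atTop atTop :=
    (tendsto_rpow_atTop ha').comp (tendsto_atTop_add_const_right _ 1 hx)
  refine summable_of_ratio_norm_eventually_le (r := 1/2) (by norm_num) ?_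
  filter_upwards [hx.eventually_ge_atTop 1,
    (tendsto_atTop_add_const_right _ a' hx).eventually_ge_atTop 2,
    hP.eventually_ge_atTop (4 * (c + 1) * (|z| + 1))] with n h1 h2 h3
  set x : ℝ := a * n + b with hxdef
  have hx0 : 0 < x := by linarith
  have hGpos : 0 < Real.Gamma x := Real.Gamma_pos_of_pos hx0
  have hG'pos : 0 < Real.Gamma (x + a) := Real.Gamma_pos_of_pos (by linarith)
  have hPoch : 0 < (ascPochhammer ℝ n).eval c := ascPochhammer_pos n c hc
  have hF : (0:ℝ) < n.factorial := by positivity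
  -- key inequality
  have key : 2 * (c + n) * |z| * Real.Gamma x ≤ (n + 1) * Real.Gamma (x + a) := by
    have hmono : Real.Gamma (x + a') ≤ Real.Gamma (x + a) := by
      rcases eq_or_lt_of_le ha'a with h | h
      · rw [h]
      · exact (Real.Gamma_strictMonoOn_Ici (by simpa using h2)
          (by simp only [Set.mem_Ici]; linarith) (by linarith)).le
    have hgau := Gamma_add_one_le ha' ha'1 hx0
    have hrec : Real.Gamma (x + 1) = x * Real.Gamma x := Real.Gamma_add_one hx0.ne'
    -- (x+a')^(1-a') ≤ (x+1)/( (x+1)^a' )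
    have hXpos : (0:ℝ) < x + 1 := by linarith
    have hPpos : (0:ℝ) < (x + 1) ^ a' := Real.rpow_pos_of_pos hXpos _
    have hsplit : (x + 1) ^ ((1:ℝ) - a') * (x + 1) ^ a' = x + 1 := by
      rw [← Real.rpow_add hXpos]; simp
    have hle1 : (x + a') ^ ((1:ℝ) - a') ≤ (x + 1) ^ ((1:ℝ) - a') :=
      Real.rpow_le_rpow (by linarith) (by linarith) (by linarith)
    have hP3 : 4 * (c + 1) * (|z| + 1) ≤ (x + 1) ^ a' := h3
    -- bound (x+1)^(1-a') ≤ (x+1) / (4(c+1)(|z|+1))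
    have hcz : (0:ℝ) < 4 * (c + 1) * (|z| + 1) := by positivity
    have hle2 : (x + 1) ^ ((1:ℝ) - a') ≤ (x + 1) / (4 * (c + 1) * (|z| + 1)) := by
      rw [le_div_iff₀ hcz]
      calc (x + 1) ^ ((1:ℝ) - a') * (4 * (c + 1) * (|z| + 1))
          ≤ (x + 1) ^ ((1:ℝ) - a') * (x + 1) ^ a' := by
            apply mul_le_mul_of_nonneg_left hP3 (Real.rpow_nonneg (by linarith) _)
        _ = x + 1 := hsplit
    -- chain to: 2(c+n)|z| (x+a')^(1-a') ≤ (n+1) x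
    have habs : (0:ℝ) ≤ |z| := abs_nonneg z
    have hcn : (0:ℝ) ≤ 2 * (c + n) * |z| := by positivity
    have hchain : 2 * (c + n) * |z| * (x + a') ^ ((1:ℝ) - a') ≤ (n + 1) * x := by
      have s1 : 2 * (c + n) * |z| * (x + a') ^ ((1:ℝ) - a')
          ≤ 2 * (c + n) * |z| * ((x + 1) / (4 * (c + 1) * (|z| + 1))) :=
        mul_le_mul_of_nonneg_left (hle1.trans hle2) hcn
      have s2 : 2 * (c + n) * |z| * ((x + 1) / (4 * (c + 1) * (|z| + 1))) ≤ (n + 1) * x := by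
        rw [show 2 * (c + (n:ℝ)) * |z| * ((x + 1) / (4 * (c + 1) * (|z| + 1)))
          = (2 * (c + n) * |z| * (x + 1)) / (4 * (c + 1) * (|z| + 1)) from by ring,
          div_le_iff₀ hcz]
        have hn0 : (0:ℝ) ≤ (n:ℝ) := Nat.cast_nonneg n
        nlinarith [mul_pos hx0 (mul_pos (by positivity : (0:ℝ) < c+1) (by positivity : (0:ℝ) < |z|+1)),
          mul_nonneg (mul_nonneg habs hn0) hx0.le, mul_nonneg habs hx0.le,
          mul_nonneg hn0 hx0.le, mul_nonneg (mul_nonneg hc.le habs) hx0.le,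
          mul_nonneg (mul_nonneg hn0 hn0) hx0.le]
      exact s1.trans s2
    -- Γ(x+a') ≥ x Γ(x) / (x+a')^(1-a')
    have hxap : (0:ℝ) < (x + a') ^ ((1:ℝ) - a') := Real.rpow_pos_of_pos (by linarith) _
    have hgau2 : x * Real.Gamma x ≤ Real.Gamma (x + a') * (x + a') ^ ((1:ℝ) - a') := by
      rw [← hrec]; exact hgau
    -- combine
    have hfin : 2 * (c + n) * |z| * Real.Gamma x * (x + a') ^ ((1:ℝ) - a')
        ≤ (n + 1) * (Real.Gamma (x + a') * (x + a') ^ ((1:ℝ) - a')) := by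
      calc 2 * (c + n) * |z| * Real.Gamma x * (x + a') ^ ((1:ℝ) - a')
          = (2 * (c + n) * |z| * (x + a') ^ ((1:ℝ) - a')) * Real.Gamma x := by ring
        _ ≤ ((n + 1) * x) * Real.Gamma x :=
            mul_le_mul_of_nonneg_right hchain hGpos.le
        _ = (n + 1) * (x * Real.Gamma x) := by ring
        _ ≤ (n + 1) * (Real.Gamma (x + a') * (x + a') ^ ((1:ℝ) - a')) :=
            mul_le_mul_of_nonneg_left hgau2 (by positivity)
    have h6 : 2 * (c + n) * |z| * Real.Gamma x ≤ (n + 1) * Real.Gamma (x + a') :=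
      le_of_mul_le_mul_right (by calc 2 * (c + n) * |z| * Real.Gamma x * (x + a') ^ ((1:ℝ) - a')
            ≤ (n + 1) * (Real.Gamma (x + a') * (x + a') ^ ((1:ℝ) - a')) := hfin
          _ = (n + 1) * Real.Gamma (x + a') * (x + a') ^ ((1:ℝ) - a') := by ring) hxap
    exact h6.trans (mul_le_mul_of_nonneg_left hmono (by positivity))
  -- now the ratio bound
  have hGsucc : Real.Gamma (a * ↑(n+1) + b) = Real.Gamma (x + a) := by
    congr 1; push_cast; rw [hxdef]; ring
  have hPochS : (ascPochhammer ℝ (n+1)).eval c = (ascPochhammer ℝ n).eval c * (c + n) :=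
    ascPochhammer_succ_eval n c
  have hnormn : ∀ m : ℕ, ‖(ascPochhammer ℝ m).eval c * z ^ m /
      (m.factorial * Real.Gamma (a * m + b))‖
      = (ascPochhammer ℝ m).eval c * |z| ^ m / (m.factorial * Real.Gamma (a * m + b)) := by
    intro m
    have hxm : (0:ℝ) < a * m + b := by positivity
    rw [Real.norm_eq_abs, abs_div, abs_mul, abs_pow,
      abs_of_pos (ascPochhammer_pos m c hc), abs_mul,
      abs_of_pos (by positivity : (0:ℝ) < (m.factorial:ℝ)),
      abs_of_pos (Real.Gamma_pos_of_pos hxm)]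
  rw [hnormn, hnormn, hPochS, hGsucc]
  have hfs : ((n+1).factorial : ℝ) = (n+1) * n.factorial := by
    rw [Nat.factorial_succ]; push_cast; ring
  rw [hfs, pow_succ, ← hxdef]
  rw [show (1:ℝ)/2 * ((ascPochhammer ℝ n).eval c * |z| ^ n / (n.factorial * Real.Gamma x))
    = (ascPochhammer ℝ n).eval c * |z| ^ n / (2 * (n.factorial * Real.Gamma x)) from by ring]
  rw [div_le_div_iff₀ (by positivity) (by positivity)]
  have hmul := mul_le_mul_of_nonneg_left key
    (by positivity : (0:ℝ) ≤ (ascPochhammer ℝ n).eval c * |z| ^ n * n.factorial / 2)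
  nlinarith [hmul]


theorem prabhakarML_convolution
    (ρ μ ν c w : ℝ) (hρ : 0 < ρ) (hμ : 0 < μ) (hν : 0 < ν) (hc : 0 < c)
    (t : ℝ) (ht : 0 < t) :
    ∫ y in (0 : ℝ)..t, y ^ (μ - 1) * prabhakarML ρ μ c (w * y ^ ρ) * (t - y) ^ (ν - 1) =
      Real.Gamma ν * t ^ (μ + ν - 1) * prabhakarML ρ (μ + ν) c (w * t ^ ρ) := by
  have hexp : ∀ n : ℕ, (0:ℝ) < ρ * n + μ := fun n => by
    have := mul_nonneg hρ.le (Nat.cast_nonneg (α := ℝ) n); linarith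
  set aN : ℕ → ℝ := fun n =>
    (ascPochhammer ℝ n).eval c * w ^ n / (n.factorial * Real.Gamma (ρ * n + μ)) with haN
  set g : ℕ → ℝ → ℝ := fun n y =>
    aN n * (y ^ (ρ * n + μ - 1) * (t - y) ^ (ν - 1)) with hg
  -- each g n is integrable on Ioc 0 t
  have hint : ∀ n : ℕ, Integrable (g n) (volume.restrict (Ioc (0:ℝ) t)) := by
    intro n
    have hβ := betaReal_integrable (hexp n) hν ht
    exact ((intervalIntegrable_iff_integrableOn_Ioc_of_le ht.le).1 hβ).const_mul (aN n)
  -- value of ∫ g n over Ioc 0 t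
  have hval : ∀ n : ℕ, ∫ y in Ioc (0:ℝ) t, g n y
      = aN n * (Real.Gamma (ρ * n + μ) * Real.Gamma ν / Real.Gamma (ρ * n + μ + ν)
          * t ^ (ρ * n + μ + ν - 1)) := by
    intro n
    rw [MeasureTheory.integral_const_mul, ← intervalIntegral.integral_of_le ht.le,
      betaReal (hexp n) hν ht]
  -- value of ∫ ‖g n‖ over Ioc 0 t
  have hnval : ∀ n : ℕ, ∫ y in Ioc (0:ℝ) t, ‖g n y‖
      = |aN n| * (Real.Gamma (ρ * n + μ) * Real.Gamma ν / Real.Gamma (ρ * n + μ + ν)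
          * t ^ (ρ * n + μ + ν - 1)) := by
    intro n
    have h1 : ∫ y in Ioc (0:ℝ) t, ‖g n y‖
        = ∫ y in Ioc (0:ℝ) t, |aN n| * (y ^ (ρ * n + μ - 1) * (t - y) ^ (ν - 1)) := by
      refine setIntegral_congr_fun measurableSet_Ioc fun y hy => ?_
      have h2 : (0:ℝ) ≤ y ^ (ρ * n + μ - 1) * (t - y) ^ (ν - 1) :=
        mul_nonneg (Real.rpow_nonneg hy.1.le _) (Real.rpow_nonneg (by linarith [hy.2]) _)
      rw [hg]; simp only [Real.norm_eq_abs, abs_mul, abs_of_nonneg h2]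
    rw [h1, MeasureTheory.integral_const_mul, ← intervalIntegral.integral_of_le ht.le,
      betaReal (hexp n) hν ht]
  -- per-term algebraic identity
  have hterm : ∀ (v : ℝ) (n : ℕ),
      ((ascPochhammer ℝ n).eval c * v ^ n / (n.factorial * Real.Gamma (ρ * n + μ)))
        * (Real.Gamma (ρ * n + μ) * Real.Gamma ν / Real.Gamma (ρ * n + μ + ν)
            * t ^ (ρ * n + μ + ν - 1))
      = Real.Gamma ν * t ^ (μ + ν - 1) *
          ((ascPochhammer ℝ n).eval c * (v * t ^ ρ) ^ n
            / (n.factorial * Real.Gamma (ρ * n + (μ + ν)))) := by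
    intro v n
    have e1 : (v * t ^ ρ) ^ n = v ^ n * t ^ (ρ * n) := by
      rw [mul_pow, ← Real.rpow_natCast (t ^ ρ) n, ← Real.rpow_mul ht.le]
    have e2 : t ^ (ρ * n + μ + ν - 1) = t ^ (ρ * n) * t ^ (μ + ν - 1) := by
      rw [← Real.rpow_add ht]; ring_nf
    have e3 : ρ * n + μ + ν = ρ * n + (μ + ν) := by ring
    have hG1 : Real.Gamma (ρ * n + μ) ≠ 0 := (Real.Gamma_pos_of_pos (hexp n)).ne'
    have hG2 : Real.Gamma (ρ * n + (μ + ν)) ≠ 0 :=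
      (Real.Gamma_pos_of_pos (by have := hexp n; linarith)).ne'
    have hF : ((n.factorial : ℝ)) ≠ 0 := by positivity
    rw [e1, e2, e3]
    field_simp
  -- summability of norms
  have hsum : Summable fun n : ℕ => ∫ y in Ioc (0:ℝ) t, ‖g n y‖ := by
    have hs := (summable_prabhakar hρ (by linarith : (0:ℝ) < μ + ν) hc (|w| * t ^ ρ)).mul_left
      (Real.Gamma ν * t ^ (μ + ν - 1))
    refine hs.congr fun n => ?_
    rw [hnval n]
    have haabs : |aN n| = (ascPochhammer ℝ n).eval c * |w| ^ n
        / (n.factorial * Real.Gamma (ρ * n + μ)) := by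
      rw [haN]
      rw [abs_div, abs_mul, abs_pow, abs_of_pos (ascPochhammer_pos n c hc), abs_mul,
        abs_of_pos (by positivity : (0:ℝ) < (n.factorial:ℝ)),
        abs_of_pos (Real.Gamma_pos_of_pos (hexp n))]
    rw [haabs, hterm |w| n]
  -- swap integral and sum
  have hswap := integral_tsum_of_summable_integral_norm hint hsum
  -- identify the integrand with the tsum
  have hptwise : ∀ y ∈ Ioc (0:ℝ) t,
      y ^ (μ - 1) * prabhakarML ρ μ c (w * y ^ ρ) * (t - y) ^ (ν - 1) = ∑' n, g n y := by
    intro y hy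
    have hy0 : (0:ℝ) < y := hy.1
    rw [prabhakarML, ← tsum_mul_left, ← tsum_mul_right]
    refine tsum_congr fun n => ?_
    have e1 : (w * y ^ ρ) ^ n = w ^ n * y ^ (ρ * n) := by
      rw [mul_pow, ← Real.rpow_natCast (y ^ ρ) n, ← Real.rpow_mul hy0.le]
    have e2 : y ^ (ρ * n + μ - 1) = y ^ (ρ * n) * y ^ (μ - 1) := by
      rw [← Real.rpow_add hy0]; ring_nf
    rw [hg, haN]
    simp only []
    rw [e1, e2]
    ring
  calc ∫ y in (0:ℝ)..t, y ^ (μ - 1) * prabhakarML ρ μ c (w * y ^ ρ) * (t - y) ^ (ν - 1)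
      = ∫ y in Ioc (0:ℝ) t, y ^ (μ - 1) * prabhakarML ρ μ c (w * y ^ ρ) * (t - y) ^ (ν - 1) :=
        intervalIntegral.integral_of_le ht.le
    _ = ∫ y in Ioc (0:ℝ) t, ∑' n, g n y :=
        setIntegral_congr_fun measurableSet_Ioc hptwise
    _ = ∑' n, ∫ y in Ioc (0:ℝ) t, g n y := hswap.symm
    _ = ∑' n, Real.Gamma ν * t ^ (μ + ν - 1) *
          ((ascPochhammer ℝ n).eval c * (w * t ^ ρ) ^ n
            / (n.factorial * Real.Gamma (ρ * n + (μ + ν)))) := by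
        refine tsum_congr fun n => ?_
        rw [hval n, haN, hterm w n]
    _ = Real.Gamma ν * t ^ (μ + ν - 1) * prabhakarML ρ (μ + ν) c (w * t ^ ρ) := by
        rw [tsum_mul_left, prabhakarML]
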